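/- Let P be a closed partial C4-marked pregraph, let O be an orbit of deficient vertices of P under Aut(P), and let P' be an extension of P in which no vertex of O is deficient and every edge of P' not in P has nonempty intersection with O. Then P' is closed: every isomorphism between two extensions of P' induces an automorphism of P'. -/

import Mathlib

/-- The possible "ends" of an edge in a pregraph: an ordinary edge (or loop)
with two endpoints, or a semi-edge with a single endpoint. -/
inductive PEnds (V : Type) where
  | edge : V → V → PEnds V
  | semi : V → PEnds V
  deriving DecidableEq

/-- A finite pregraph: a multigraph that may contain loops, parallel edges and
semi-edges.  Edges are abstract and carry their endpoints via `ends`. -/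
structure Pregraph where
  V : Type
  E : Type
  [fintypeV : Fintype V]
  [decEqV : DecidableEq V]
  [fintypeE : Fintype E]
  [decEqE : DecidableEq E]
  ends : E → PEnds V

attribute [instance] Pregraph.fintypeV Pregraph.decEqV Pregraph.fintypeE Pregraph.decEqE

namespace Pregraph

/-- The number of end-points that edge `e` has at the vertex `v`
(a loop at `v` counts twice, a semi-edge once). -/
def endCount (P : Pregraph) (v : P.V) (e : P.E) : ℕ :=
  match P.ends e with
  | .edge a b => (if a = v then 1 else 0) + (if b = v then 1 else 0)
  | .semi a => if a = v then 1 else 0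

/-- The degree of a vertex: loops count 2, semi-edges count 1. -/
def degree (P : Pregraph) (v : P.V) : ℕ := ∑ e : P.E, P.endCount v e

open Classical in
/-- The degree of a vertex inside a set `F` of edges. -/
noncomputable def degIn (P : Pregraph) (F : Set P.E) (v : P.V) : ℕ :=
  ∑ e : P.E, if e ∈ F then P.endCount v e else 0

/-- `e` is a proper edge with endpoints `a` and `b`. -/
def joins (P : Pregraph) (e : P.E) (a b : P.V) : Prop :=
  P.ends e = .edge a b ∨ P.ends e = .edge b a

/-- The edge `e` is incident to the vertex `v`. -/
def incident (P : Pregraph) (e : P.E) (v : P.V) : Prop :=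
  match P.ends e with
  | .edge a b => a = v ∨ b = v
  | .semi a => a = v

/-- Adjacency via a proper edge. -/
def Adj (P : Pregraph) (u w : P.V) : Prop := ∃ e, P.joins e u w

/-- Connectedness of a pregraph. -/
def Connected (P : Pregraph) : Prop := ∀ u w : P.V, Relation.ReflTransGen P.Adj u w

/-- A cubic pregraph: connected and every vertex has degree 3. -/
def Cubic (P : Pregraph) : Prop := P.Connected ∧ ∀ v, P.degree v = 3

/-- The edge `e` has at least one endpoint in the vertex set `C`. -/
def touches (P : Pregraph) (e : P.E) (C : Set P.V) : Prop :=
  match P.ends e with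
  | .edge a b => a ∈ C ∨ b ∈ C
  | .semi a => a ∈ C

/-- `C` is a component of the edge set `F` of type `q₁` : a 4-cycle. -/
def IsQ1Comp (P : Pregraph) (F : Set P.E) (C : Set P.V) : Prop :=
  ∃ a b c d : P.V, a ≠ b ∧ a ≠ c ∧ a ≠ d ∧ b ≠ c ∧ b ≠ d ∧ c ≠ d ∧
    C = {a, b, c, d} ∧
    ∃ e1 e2 e3 e4 : P.E, e1 ≠ e2 ∧ e1 ≠ e3 ∧ e1 ≠ e4 ∧ e2 ≠ e3 ∧ e2 ≠ e4 ∧ e3 ≠ e4 ∧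
      {e ∈ F | P.touches e C} = {e1, e2, e3, e4} ∧
      P.joins e1 a b ∧ P.joins e2 b c ∧ P.joins e3 c d ∧ P.joins e4 d a

/-- `C` is a component of the edge set `F` of type `q₂` : a digon. -/
def IsQ2Comp (P : Pregraph) (F : Set P.E) (C : Set P.V) : Prop :=
  ∃ a b : P.V, a ≠ b ∧ C = {a, b} ∧
    ∃ e1 e2 : P.E, e1 ≠ e2 ∧ {e ∈ F | P.touches e C} = {e1, e2} ∧
      P.joins e1 a b ∧ P.joins e2 a b

/-- `C` is a component of the edge set `F` of type `q₃` : an edge together with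
a semi-edge at each endpoint. -/
def IsQ3Comp (P : Pregraph) (F : Set P.E) (C : Set P.V) : Prop :=
  ∃ a b : P.V, a ≠ b ∧ C = {a, b} ∧
    ∃ e1 e2 e3 : P.E, e1 ≠ e2 ∧ e1 ≠ e3 ∧ e2 ≠ e3 ∧
      {e ∈ F | P.touches e C} = {e1, e2, e3} ∧
      P.joins e1 a b ∧ P.ends e2 = .semi a ∧ P.ends e3 = .semi b

/-- `C` is a component of the edge set `F` of type `q₄` : a single vertex with
two semi-edges. -/
def IsQ4Comp (P : Pregraph) (F : Set P.E) (C : Set P.V) : Prop :=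
  ∃ a : P.V, C = {a} ∧
    ∃ e1 e2 : P.E, e1 ≠ e2 ∧ {e ∈ F | P.touches e C} = {e1, e2} ∧
      P.ends e1 = .semi a ∧ P.ends e2 = .semi a

/-- `C` is a component of `F` which is a quotient of `C₄`. -/
def IsCQComp (P : Pregraph) (F : Set P.E) (C : Set P.V) : Prop :=
  P.IsQ1Comp F C ∨ P.IsQ2Comp F C ∨ P.IsQ3Comp F C ∨ P.IsQ4Comp F C

/-- `F` is a `C₄`-quotient 2-factor with component partition `Ps`. -/
def IsCQFactorWith (P : Pregraph) (F : Set P.E) (Ps : Set (Set P.V)) : Prop :=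
  (∀ C ∈ Ps, P.IsCQComp F C) ∧
  (∀ v : P.V, ∃ C ∈ Ps, v ∈ C) ∧
  (∀ C ∈ Ps, ∀ D ∈ Ps, C ≠ D → Disjoint C D)

/-- `F` is a `C₄`-quotient 2-factor: a spanning subgraph in which every vertex has
degree 2 and every component is a quotient of `C₄`. -/
def IsCQFactor (P : Pregraph) (F : Set P.E) : Prop := ∃ Ps, P.IsCQFactorWith F Ps

/-- The pregraph has a `C₄`-quotient 2-factor. -/
def HasCQFactor (P : Pregraph) : Prop := ∃ F, P.IsCQFactor F

/-- Compatibility of ends under a vertex map (edges are unordered). -/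
def endsRel {V W : Type} (σ : V → W) : PEnds V → PEnds W → Prop
  | .edge a b, x => x = .edge (σ a) (σ b) ∨ x = .edge (σ b) (σ a)
  | .semi a, x => x = .semi (σ a)

/-- An isomorphism of pregraphs. -/
structure Iso (P Q : Pregraph) where
  vmap : P.V ≃ Q.V
  emap : P.E ≃ Q.E
  compat : ∀ e, endsRel vmap (P.ends e) (Q.ends (emap e))

/-- Two edge sets (e.g. two 2-factors) of `P` are isomorphic if some automorphism
of `P` maps one onto the other. -/
def FactorIso (P : Pregraph) (F1 F2 : Set P.E) : Prop :=
  ∃ φ : Iso P P, ∀ e, e ∈ F1 ↔ φ.emap e ∈ F2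

/-- Adjacency in the ladder graph `K₂ × Pₙ` on `Fin n × Fin 2`. -/
def ladderAdj (n : ℕ) (p q : Fin n × Fin 2) : Prop :=
  (p.1 = q.1 ∧ p.2 ≠ q.2) ∨ (p.2 = q.2 ∧ ((p.1 : ℕ) + 1 = q.1 ∨ (q.1 : ℕ) + 1 = p.1))

/-- The subgraph of `P` with vertex set `S` and edge set `F` is isomorphic to the
ladder `K₂ × Pₙ` for some `n ≥ 2`. -/
def IsLadder (P : Pregraph) (S : Set P.V) (F : Set P.E) : Prop :=
  ∃ n : ℕ, 2 ≤ n ∧ ∃ f : Fin n × Fin 2 → P.V, Function.Injective f ∧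
    S = Set.range f ∧
    (∀ e ∈ F, ∃ p q, ladderAdj n p q ∧ P.joins e (f p) (f q)) ∧
    (∀ p q, ladderAdj n p q → ∃! e, e ∈ F ∧ P.joins e (f p) (f q))

/-- A ladder of `P`: a maximal subgraph isomorphic to `K₂ × Pₙ`, `n ≥ 2`. -/
def IsMaxLadder (P : Pregraph) (S : Set P.V) (F : Set P.E) : Prop :=
  P.IsLadder S F ∧
  ∀ S' F', P.IsLadder S' F' → S ⊆ S' → F ⊆ F' → S = S' ∧ F = F'

/-- A digon: two distinct vertices joined by two parallel edges. -/
def IsDigonPair (P : Pregraph) (a b : P.V) : Prop :=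
  a ≠ b ∧ ∃ e1 e2 : P.E, e1 ≠ e2 ∧ P.joins e1 a b ∧ P.joins e2 a b

end Pregraph

/-- A pregraph with an edge 2-colouring (colour 0 = factor edges, colour 1 =
other edges). -/
structure CPregraph where
  P : Pregraph
  col : P.E → Fin 2

/-- A colour-preserving isomorphism of 2-edge-coloured pregraphs. -/
structure CIso (X Y : CPregraph) where
  vmap : X.P.V ≃ Y.P.V
  emap : X.P.E ≃ Y.P.E
  compat : ∀ e, Pregraph.endsRel vmap (X.P.ends e) (Y.P.ends (emap e))
  colcompat : ∀ e, Y.col (emap e) = X.col e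

/-- A partial `C₄`-marked pregraph: the colour-0 edges form a `C₄`-quotient
2-factor and every vertex has degree 2 or 3. -/
def IsPartialMarked (X : CPregraph) : Prop :=
  X.P.IsCQFactor {e | X.col e = 0} ∧ ∀ v, X.P.degree v = 2 ∨ X.P.degree v = 3

/-- A deficient vertex: a vertex of degree 2. -/
def Deficient (X : CPregraph) (v : X.P.V) : Prop := X.P.degree v = 2

/-- A set of new (colour-1) edges between deficient vertices, pairwise sharing no
endpoints; each pair `(u, v) ∈ A` represents one new edge joining `u` and `v`. -/
def IsExtSet (X : CPregraph) (A : Set (X.P.V × X.P.V)) : Prop :=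
  (∀ p ∈ A, p.1 ≠ p.2) ∧
  (∀ p ∈ A, Deficient X p.1 ∧ Deficient X p.2) ∧
  (∀ p ∈ A, ∀ q ∈ A, p ≠ q → p.1 ≠ q.1 ∧ p.1 ≠ q.2 ∧ p.2 ≠ q.1 ∧ p.2 ≠ q.2)

/-- The pregraph obtained from `X` by adding the new edges in `A`. -/
noncomputable def extPregraph (X : CPregraph) (A : Set (X.P.V × X.P.V)) : Pregraph :=
  letI : Fintype ↥A := (Set.toFinite A).fintype
  letI : DecidableEq ↥A := Classical.decEq _
  { V := X.P.V
    E := X.P.E ⊕ ↥A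
    ends := Sum.elim X.P.ends (fun p => PEnds.edge p.1.1 p.1.2) }

/-- The coloured pregraph obtained from `X` by adding the new edges in `A`, all
with colour 1: an extension of `X`. -/
noncomputable def extendC (X : CPregraph) (A : Set (X.P.V × X.P.V)) : CPregraph :=
  { P := extPregraph X A
    col := Sum.elim X.col (fun _ => 1) }

/-- `X` is closed: every (colour-preserving) isomorphism between two extensions of
`X` induces an automorphism of `X`. -/
def ClosedMarked (X : CPregraph) : Prop :=
  ∀ A1 A2 : Set (X.P.V × X.P.V), IsExtSet X A1 → IsExtSet X A2 →
    ∀ φ : CIso (extendC X A1) (extendC X A2),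
      ∃ ψ : CIso X X, ψ.vmap = φ.vmap

/-- `O` is an orbit of deficient vertices of `X` under the automorphism group of
`X`. -/
def IsDeficientOrbit (X : CPregraph) (O : Set X.P.V) : Prop :=
  ∃ v0, Deficient X v0 ∧ O = {v | ∃ ψ : CIso X X, ψ.vmap v0 = v}

section Aux

namespace Pregraph

lemma incident_left_of_joins (P : Pregraph) {e : P.E} {a b : P.V}
    (h : P.joins e a b) : P.incident e a := by
  rcases h with h | h <;> simp [Pregraph.incident, h]

lemma incident_right_of_joins (P : Pregraph) {e : P.E} {a b : P.V}
    (h : P.joins e a b) : P.incident e b := by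
  rcases h with h | h <;> simp [Pregraph.incident, h]

lemma incident_of_semi (P : Pregraph) {e : P.E} {a : P.V}
    (h : P.ends e = .semi a) : P.incident e a := by
  simp [Pregraph.incident, h]

lemma endCount_pos_of_incident (P : Pregraph) {e : P.E} {v : P.V}
    (h : P.incident e v) : 1 ≤ P.endCount v e := by
  cases hx : P.ends e with
  | edge a b =>
    simp only [Pregraph.incident, hx] at h
    simp only [Pregraph.endCount, hx]
    rcases h with rfl | rfl <;> simp
  | semi a =>
    simp only [Pregraph.incident, hx] at h
    simp only [Pregraph.endCount, hx]
    simp [h]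

lemma degree_ge_of_three (P : Pregraph) {v : P.V} {e1 e2 e3 : P.E}
    (h12 : e1 ≠ e2) (h13 : e1 ≠ e3) (h23 : e2 ≠ e3)
    (c1 : 1 ≤ P.endCount v e1) (c2 : 1 ≤ P.endCount v e2)
    (c3 : 1 ≤ P.endCount v e3) : 3 ≤ P.degree v := by
  have hsub : ({e1, e2, e3} : Finset P.E) ⊆ Finset.univ := Finset.subset_univ _
  have hle := Finset.sum_le_sum_of_subset (f := P.endCount v) hsub
  rw [Finset.sum_insert (by simp [h12, h13]), Finset.sum_insert (by simp [h23]),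
    Finset.sum_singleton] at hle
  unfold Pregraph.degree
  omega

end Pregraph

/-- Composition of colour-preserving isomorphisms. -/
def CIso.trans {X Y Z : CPregraph} (f : CIso X Y) (g : CIso Y Z) : CIso X Z where
  vmap := f.vmap.trans g.vmap
  emap := f.emap.trans g.emap
  compat := by
    intro e
    have h1 := f.compat e
    have h2 := g.compat (f.emap e)
    cases hx : X.P.ends e with
    | edge a b =>
      rw [hx] at h1
      rcases h1 with h1 | h1 <;> rw [h1] at h2 <;>
        rcases h2 with h2 | h2 <;>
        simp [Pregraph.endsRel, h2]
    | semi a =>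
      rw [hx] at h1
      rw [h1] at h2
      exact h2
  colcompat := fun e => (g.colcompat _).trans (f.colcompat e)

lemma CIso.degree_eq {X Y : CPregraph} (ψ : CIso X Y) (v : X.P.V) :
    Y.P.degree (ψ.vmap v) = X.P.degree v := by
  unfold Pregraph.degree
  rw [← Equiv.sum_comp ψ.emap (fun e => Y.P.endCount (ψ.vmap v) e)]
  apply Finset.sum_congr rfl
  intro e _
  have h := ψ.compat e
  cases hx : X.P.ends e with
  | edge a b =>
    rw [hx] at h
    rcases h with h | h <;>
      simp only [Pregraph.endCount, hx, h, Equiv.apply_eq_iff_eq] <;> omega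
  | semi a =>
    rw [hx] at h
    have h' : Y.P.ends (ψ.emap e) = PEnds.semi (ψ.vmap a) := h
    simp only [Pregraph.endCount, hx, h', Equiv.apply_eq_iff_eq]

/-- In a partial marked pregraph, every edge incident to a deficient vertex is a
factor (colour-0) edge. -/
lemma deficient_col_zero (X : CPregraph) (hX : IsPartialMarked X) {w : X.P.V}
    (hw : X.P.degree w = 2) {e : X.P.E} (hinc : X.P.incident e w) : X.col e = 0 := by
  by_contra hce
  obtain ⟨⟨Ps, hcomp, hcover, _⟩, _⟩ := hX
  obtain ⟨C, hC, hwC⟩ := hcover w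
  have main : ∃ e1 e2 : X.P.E, e1 ≠ e2 ∧ X.col e1 = 0 ∧ X.col e2 = 0 ∧
      X.P.incident e1 w ∧ X.P.incident e2 w := by
    rcases hcomp C hC with h | h | h | h
    · obtain ⟨a, b, c, d, hab, hac, had, hbc, hbd, hcd, rfl, e1, e2, e3, e4,
        h12, h13, h14, h23, h24, h34, hF, j1, j2, j3, j4⟩ := h
      have m : ∀ x ∈ ({e1, e2, e3, e4} : Set X.P.E), X.col x = 0 := by
        intro x hx
        rw [← hF] at hx
        exact hx.1
      simp only [Set.mem_insert_iff, Set.mem_singleton_iff] at hwC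
      rcases hwC with rfl | rfl | rfl | rfl
      · exact ⟨e1, e4, h14, m _ (by simp), m _ (by simp),
          X.P.incident_left_of_joins j1, X.P.incident_right_of_joins j4⟩
      · exact ⟨e1, e2, h12, m _ (by simp), m _ (by simp),
          X.P.incident_right_of_joins j1, X.P.incident_left_of_joins j2⟩
      · exact ⟨e2, e3, h23, m _ (by simp), m _ (by simp),
          X.P.incident_right_of_joins j2, X.P.incident_left_of_joins j3⟩
      · exact ⟨e3, e4, h34, m _ (by simp), m _ (by simp),
          X.P.incident_right_of_joins j3, X.P.incident_left_of_joins j4⟩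
    · obtain ⟨a, b, hab, rfl, e1, e2, h12, hF, j1, j2⟩ := h
      have m : ∀ x ∈ ({e1, e2} : Set X.P.E), X.col x = 0 := by
        intro x hx
        rw [← hF] at hx
        exact hx.1
      simp only [Set.mem_insert_iff, Set.mem_singleton_iff] at hwC
      rcases hwC with rfl | rfl
      · exact ⟨e1, e2, h12, m _ (by simp), m _ (by simp),
          X.P.incident_left_of_joins j1, X.P.incident_left_of_joins j2⟩
      · exact ⟨e1, e2, h12, m _ (by simp), m _ (by simp),
          X.P.incident_right_of_joins j1, X.P.incident_right_of_joins j2⟩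
    · obtain ⟨a, b, hab, rfl, e1, e2, e3, h12, h13, h23, hF, j1, s2, s3⟩ := h
      have m : ∀ x ∈ ({e1, e2, e3} : Set X.P.E), X.col x = 0 := by
        intro x hx
        rw [← hF] at hx
        exact hx.1
      simp only [Set.mem_insert_iff, Set.mem_singleton_iff] at hwC
      rcases hwC with rfl | rfl
      · exact ⟨e1, e2, h12, m _ (by simp), m _ (by simp),
          X.P.incident_left_of_joins j1, X.P.incident_of_semi s2⟩
      · exact ⟨e1, e3, h13, m _ (by simp), m _ (by simp),
          X.P.incident_right_of_joins j1, X.P.incident_of_semi s3⟩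
    · obtain ⟨a, rfl, e1, e2, h12, hF, s1, s2⟩ := h
      have m : ∀ x ∈ ({e1, e2} : Set X.P.E), X.col x = 0 := by
        intro x hx
        rw [← hF] at hx
        exact hx.1
      simp only [Set.mem_singleton_iff] at hwC
      subst hwC
      exact ⟨e1, e2, h12, m _ (by simp), m _ (by simp),
        X.P.incident_of_semi s1, X.P.incident_of_semi s2⟩
  obtain ⟨e1, e2, hne, c1, c2, i1, i2⟩ := main
  have he1 : e ≠ e1 := fun h => hce (h ▸ c1)
  have he2 : e ≠ e2 := fun h => hce (h ▸ c2)
  have := X.P.degree_ge_of_three he1 he2 hne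
    (X.P.endCount_pos_of_incident hinc)
    (X.P.endCount_pos_of_incident i1)
    (X.P.endCount_pos_of_incident i2)
  omega

end Aux

/-- Let `P` be a closed partial `C₄`-marked pregraph, `O` an orbit
of deficient vertices under `Aut(P)`, and `P'` an extension of `P` (given by the
new edge set `A`) in which no vertex of `O` is deficient and every new edge meets
`O`.  Then `P'` is closed: every isomorphism between two extensions of `P'`
induces an automorphism of `P'`. -/
theorem extension_closed (X : CPregraph) (hX : IsPartialMarked X)
    (hclosed : ClosedMarked X) (O : Set X.P.V) (hO : IsDeficientOrbit X O)
    (A : Set (X.P.V × X.P.V)) (hA : IsExtSet X A)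
    (hcov : ∀ v ∈ O, ∃ p ∈ A, p.1 = v ∨ p.2 = v)
    (hmeet : ∀ p ∈ A, p.1 ∈ O ∨ p.2 ∈ O) :
    ∀ A1 A2 : Set (X.P.V × X.P.V), IsExtSet X A1 → IsExtSet X A2 →
      A ⊆ A1 → A ⊆ A2 →
      ∀ φ : CIso (extendC X A1) (extendC X A2),
        ∃ ψ : CIso (extendC X A) (extendC X A), ψ.vmap = φ.vmap := by
  intro A1 A2 hA1 hA2 hAA1 hAA2 φ
  obtain ⟨ψ0, hψ0⟩ := hclosed A1 A2 hA1 hA2 φ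
  obtain ⟨v0, hv0, hOeq⟩ := hO
  have hvm : ∀ v : X.P.V, ψ0.vmap v = φ.vmap v := fun v => by rw [hψ0]; exact rfl
  have hOdeg : ∀ v ∈ O, X.P.degree v = 2 := by
    intro v hv
    rw [hOeq] at hv
    obtain ⟨χ, hχ⟩ := hv
    rw [← hχ, χ.degree_eq]
    exact hv0
  have hOclosed : ∀ v ∈ O, ψ0.vmap v ∈ O := by
    intro v hv
    rw [hOeq] at hv ⊢
    obtain ⟨χ, hχ⟩ := hv
    exact ⟨χ.trans ψ0, by simp [CIso.trans, hχ]⟩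
  -- every new A-edge is mapped by φ to a new A-edge
  have key : ∀ p : ↥A, ∃ q : ↥A,
      φ.emap (Sum.inr (Set.inclusion hAA1 p)) = Sum.inr (Set.inclusion hAA2 q) := by
    rintro ⟨p, hp⟩
    have hcol : (extendC X A2).col (φ.emap (Sum.inr (Set.inclusion hAA1 ⟨p, hp⟩))) = 1 :=
      φ.colcompat _
    have hends := φ.compat (Sum.inr (Set.inclusion hAA1 ⟨p, hp⟩))
    obtain ⟨e', he'⟩ : ∃ e' : X.P.E ⊕ ↥A2,
        φ.emap (Sum.inr (Set.inclusion hAA1 ⟨p, hp⟩)) = e' := ⟨_, rfl⟩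
    rw [he'] at hcol hends
    -- endpoint of the new edge lying in the orbit
    have hcontra : ∀ v ∈ O, ∀ e0 : X.P.E, X.P.incident e0 (φ.vmap v) →
        X.col e0 = 1 → False := by
      intro v hv e0 hinc hc
      have hw : φ.vmap v ∈ O := hvm v ▸ hOclosed v hv
      have := deficient_col_zero X hX (hOdeg _ hw) hinc
      rw [this] at hc
      exact absurd hc (by decide)
    cases e' with
    | inl e0 =>
      exfalso
      have hends' : X.P.ends e0 = PEnds.edge (φ.vmap p.1) (φ.vmap p.2) ∨
          X.P.ends e0 = PEnds.edge (φ.vmap p.2) (φ.vmap p.1) := hends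
      have hc1 : X.col e0 = 1 := hcol
      rcases hmeet p hp with hm | hm <;> rcases hends' with h | h
      · exact hcontra p.1 hm e0 (by simp [Pregraph.incident, h]; exact Or.inl rfl) hc1
      · exact hcontra p.1 hm e0 (by simp [Pregraph.incident, h]; exact Or.inr rfl) hc1
      · exact hcontra p.2 hm e0 (by simp [Pregraph.incident, h]; exact Or.inr rfl) hc1
      · exact hcontra p.2 hm e0 (by simp [Pregraph.incident, h]; exact Or.inl rfl) hc1
    | inr q' =>
      have hends' : (q'.1.1 = φ.vmap p.1 ∧ q'.1.2 = φ.vmap p.2) ∨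
          (q'.1.1 = φ.vmap p.2 ∧ q'.1.2 = φ.vmap p.1) := by
        have h : PEnds.edge q'.1.1 q'.1.2 = PEnds.edge (φ.vmap p.1) (φ.vmap p.2) ∨
            PEnds.edge q'.1.1 q'.1.2 = PEnds.edge (φ.vmap p.2) (φ.vmap p.1) := hends
        rcases h with h | h
        · exact Or.inl ⟨(PEnds.edge.injEq _ _ _ _ ▸ h).1, (PEnds.edge.injEq _ _ _ _ ▸ h).2⟩
        · exact Or.inr ⟨(PEnds.edge.injEq _ _ _ _ ▸ h).1, (PEnds.edge.injEq _ _ _ _ ▸ h).2⟩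
      have finish : ∀ w ∈ O, (q'.1.1 = w ∨ q'.1.2 = w) →
          ∃ q : ↥A, (Sum.inr q' : X.P.E ⊕ ↥A2) = Sum.inr (Set.inclusion hAA2 q) := by
        intro w hw hq'or
        obtain ⟨q, hqA, hqw⟩ := hcov w hw
        have hval : q'.1 = q := by
          by_contra hne
          obtain ⟨n1, n2, n3, n4⟩ := hA2.2.2 q'.1 q'.2 q (hAA2 hqA) hne
          rcases hq'or with h | h <;> rcases hqw with h' | h'
          · exact n1 (h.trans h'.symm)
          · exact n2 (h.trans h'.symm)
          · exact n3 (h.trans h'.symm)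
          · exact n4 (h.trans h'.symm)
        exact ⟨⟨q, hqA⟩, by rw [Sum.inr.injEq]; exact Subtype.ext hval⟩
      rw [he']
      rcases hmeet p hp with hm | hm
      · refine finish (φ.vmap p.1) (hvm p.1 ▸ hOclosed p.1 hm) ?_
        rcases hends' with ⟨h, _⟩ | ⟨_, h⟩
        · exact Or.inl h
        · exact Or.inr h
      · refine finish (φ.vmap p.2) (hvm p.2 ▸ hOclosed p.2 hm) ?_
        rcases hends' with ⟨_, h⟩ | ⟨h, _⟩
        · exact Or.inr h
        · exact Or.inl h
  choose f hf using key
  have hinj : Function.Injective f := by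
    intro p p' h
    have h2 : (Sum.inr (Set.inclusion hAA1 p) : (extendC X A1).P.E) =
        Sum.inr (Set.inclusion hAA1 p') :=
      φ.emap.injective (by rw [hf p, hf p', h])
    have h3 : Set.inclusion hAA1 p = Set.inclusion hAA1 p' := by
      exact Sum.inr.inj h2
    exact Set.inclusion_injective hAA1 h3
  have hbij : Function.Bijective f := Finite.injective_iff_bijective.mp hinj
  refine ⟨⟨φ.vmap, Equiv.sumCongr ψ0.emap (Equiv.ofBijective f hbij), ?_, ?_⟩, rfl⟩
  · intro e
    cases e with
    | inl e =>
      have h := ψ0.compat e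
      rw [hψ0] at h
      exact h
    | inr p =>
      have h := φ.compat (Sum.inr (Set.inclusion hAA1 p))
      rw [hf p] at h
      exact h
  · intro e
    cases e with
    | inl e => exact ψ0.colcompat e
    | inr p => rfl
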